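/- arXiv:1503.05656 — 4 statements merged into one kernel-verified Lean document; each statement's English description precedes it below -/
import Mathlib

section
/- In the Densest-k-Subgraph reduction instance: for every H contained in V and every vertex w in V, QU(H union {w}) >= QU(H); that is, annotating an additional non-leaf concept never decreases the queriability of the design. -/
open scoped Classical BigOperators

namespace DkSReduction

variable {V : Type} [Fintype V] [DecidableEq V]

/-- The leaf concepts of the Densest-k-Subgraph reduction instance:
the disjoint union of the vertices and the edges of `G`. -/
abbrev Leaf (G : SimpleGraph V) [DecidableRel G.Adj] : Type :=
  V ⊕ {e : Sym2 V // e ∈ G.edgeFinset}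

/-- The trace of a leaf `l` w.r.t. a design `H ⊆ V`: the vertices of `H` equal to
`l` (if `l` is a vertex), resp. the endpoints of `l` lying in `H` (if `l` is an
edge). -/
noncomputable def tau (G : SimpleGraph V) [DecidableRel G.Adj] (H : Finset V) :
    Leaf G → Finset V
  | Sum.inl v => H.filter (fun w => w = v)
  | Sum.inr e => H.filter (fun w => w ∈ e.val)

/-- A leaf is a singleton for `H` if its trace is nonempty and no other leaf has
the same trace. -/
def IsSingleton (G : SimpleGraph V) [DecidableRel G.Adj] (H : Finset V)
    (l : Leaf G) : Prop :=
  (tau G H l).Nonempty ∧ ∀ l' : Leaf G, l' ≠ l → tau G H l' ≠ tau G H l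

/-- The number of singleton leaves for `H`. -/
noncomputable def sigma (G : SimpleGraph V) [DecidableRel G.Adj] (H : Finset V) : ℕ :=
  (Finset.univ.filter (IsSingleton G H)).card

/-- The queriability of a design `H ⊆ V` in the reduction instance:
`QU(H) = u*d*( σ(H)*m*log n + (n + m - σ(H)) )`. -/
noncomputable def QU (G : SimpleGraph V) [DecidableRel G.Adj] (u d : ℝ)
    (H : Finset V) : ℝ :=
  u * d * ((sigma G H : ℝ) * (G.edgeFinset.card : ℝ) * Real.log (Fintype.card V : ℝ)
      + ((Fintype.card V : ℝ) + (G.edgeFinset.card : ℝ) - (sigma G H : ℝ)))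

end DkSReduction

open DkSReduction

/-- In the Densest-k-Subgraph reduction instance, annotating an
additional non-leaf concept never decreases queriability:
`QU(H ∪ {w}) ≥ QU(H)`. -/
theorem QU_insert_mono {V : Type} [Fintype V] [DecidableEq V]
    (G : SimpleGraph V) [DecidableRel G.Adj]
    (hn : 2 ≤ Fintype.card V) (u d : ℝ) (hu : 0 < u) (hd : 0 < d)
    (hml : 1 ≤ (G.edgeFinset.card : ℝ) * Real.log (Fintype.card V : ℝ))
    (H : Finset V) (w : V) :
    QU G u d H ≤ QU G u d (H ∪ {w}) := by
  by_cases hw : w ∈ H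
  · have : H ∪ {w} = H := by
      ext x; simp only [Finset.mem_union, Finset.mem_singleton]
      constructor
      · rintro (h | rfl) <;> [exact h; exact hw]
      · exact Or.inl
    rw [this]
  · -- key: erasing w from the new trace recovers the old trace
    have htau : ∀ l : Leaf G, (tau G (H ∪ {w}) l).erase w = tau G H l := by
      intro l
      cases l with
      | inl v =>
        ext x
        simp only [tau, Finset.mem_erase, Finset.mem_filter, Finset.mem_union,
          Finset.mem_singleton]
        constructor
        · rintro ⟨hxw, hx | rfl, hp⟩
          · exact ⟨hx, hp⟩
          · exact absurd rfl hxw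
        · rintro ⟨hx, hp⟩
          exact ⟨fun h => hw (h ▸ hx), Or.inl hx, hp⟩
      | inr e =>
        ext x
        simp only [tau, Finset.mem_erase, Finset.mem_filter, Finset.mem_union,
          Finset.mem_singleton]
        constructor
        · rintro ⟨hxw, hx | rfl, hp⟩
          · exact ⟨hx, hp⟩
          · exact absurd rfl hxw
        · rintro ⟨hx, hp⟩
          exact ⟨fun h => hw (h ▸ hx), Or.inl hx, hp⟩
    have hsub : ∀ l : Leaf G, tau G H l ⊆ tau G (H ∪ {w}) l := by
      intro l
      cases l with
      | inl v => exact Finset.filter_subset_filter _ Finset.subset_union_left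
      | inr e => exact Finset.filter_subset_filter _ Finset.subset_union_left
    have hsing : ∀ l : Leaf G, IsSingleton G H l → IsSingleton G (H ∪ {w}) l := by
      rintro l ⟨hne, huniq⟩
      refine ⟨hne.mono (hsub l), fun l' hl' heq => huniq l' hl' ?_⟩
      have := congrArg (fun s => Finset.erase s w) heq
      simpa only [htau] using this
    have hσ : sigma G H ≤ sigma G (H ∪ {w}) := by
      apply Finset.card_le_card
      intro l hl
      simp only [Finset.mem_filter, Finset.mem_univ, true_and] at hl ⊢
      exact hsing l hl
    have hσ' : (sigma G H : ℝ) ≤ (sigma G (H ∪ {w}) : ℝ) := Nat.cast_le.mpr hσ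
    unfold QU
    have hud : 0 < u * d := mul_pos hu hd
    have key : ∀ s : ℝ, s * (G.edgeFinset.card : ℝ) * Real.log (Fintype.card V : ℝ)
        + ((Fintype.card V : ℝ) + (G.edgeFinset.card : ℝ) - s)
        = s * ((G.edgeFinset.card : ℝ) * Real.log (Fintype.card V : ℝ) - 1)
        + ((Fintype.card V : ℝ) + (G.edgeFinset.card : ℝ)) := by intro s; ring
    rw [key, key]
    apply mul_le_mul_of_nonneg_left _ hud.le
    have : (0:ℝ) ≤ (G.edgeFinset.card : ℝ) * Real.log (Fintype.card V : ℝ) - 1 :=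
      by linarith
    nlinarith
end

section
/- In the Densest-k-Subgraph reduction instance: for every H contained in V, a leaf l is a singleton for H if and only if either l is an edge with both endpoints in H, or l is a vertex v in H all of whose neighbors in G lie in H. Consequently sigma(H) = |E(H)| + |{v in H : N_G(v) is contained in H}|, where E(H) denotes the set of edges of G with both endpoints in H and N_G(v) the neighborhood of v in G. -/
open scoped Classical BigOperators

open DkSReduction

/-- In the Densest-k-Subgraph reduction instance, a leaf `l` is a
singleton for `H` iff `l` is an edge with both endpoints in `H`, or `l` is a vertex
of `H` all of whose neighbors lie in `H`. Consequently
`σ(H) = |E(H)| + |{v ∈ H : N_G(v) ⊆ H}|`. -/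
theorem singleton_characterization {V : Type} [Fintype V] [DecidableEq V]
    (G : SimpleGraph V) [DecidableRel G.Adj]
    (hn : 2 ≤ Fintype.card V) (H : Finset V) :
    (∀ l : Leaf G, IsSingleton G H l ↔
        ((∃ e : {e : Sym2 V // e ∈ G.edgeFinset},
            l = Sum.inr e ∧ ∀ v ∈ e.val, v ∈ H) ∨
         (∃ v : V, l = Sum.inl v ∧ v ∈ H ∧ ∀ w : V, G.Adj v w → w ∈ H))) ∧
    sigma G H =
      (G.edgeFinset.filter (fun e => ∀ v ∈ e, v ∈ H)).card
        + (H.filter (fun v => ∀ w : V, G.Adj v w → w ∈ H)).card := by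
  classical
  have key : ∀ l : Leaf G, IsSingleton G H l ↔
      ((∃ e : {e : Sym2 V // e ∈ G.edgeFinset},
          l = Sum.inr e ∧ ∀ v ∈ e.val, v ∈ H) ∨
       (∃ v : V, l = Sum.inl v ∧ v ∈ H ∧ ∀ w : V, G.Adj v w → w ∈ H)) := by
    intro l
    constructor
    · rintro ⟨hne, huniq⟩
      cases l with
      | inl v =>
        right
        obtain ⟨x, hx⟩ := hne
        simp only [tau, Finset.mem_filter] at hx
        obtain ⟨hxH, rfl⟩ := hx
        refine ⟨x, rfl, hxH, ?_⟩
        intro w hw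
        by_contra hwH
        have he : s(x, w) ∈ G.edgeFinset := by
          simpa [SimpleGraph.mem_edgeFinset, SimpleGraph.mem_edgeSet] using hw
        apply huniq (Sum.inr ⟨s(x, w), he⟩) (by simp)
        ext y
        simp only [tau, Finset.mem_filter, Sym2.mem_iff]
        constructor
        · rintro ⟨hy, (rfl | rfl)⟩
          · exact ⟨hy, rfl⟩
          · exact absurd hy hwH
        · rintro ⟨hy, rfl⟩
          exact ⟨hy, Or.inl rfl⟩
      | inr e =>
        left
        refine ⟨e, rfl, ?_⟩
        have haux : ∀ a b : V, e.val = s(a, b) → a ∈ H → b ∈ H := by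
          intro a b hab haH
          by_contra hbH
          have hadj : G.Adj a b := by
            have := e.2
            rw [SimpleGraph.mem_edgeFinset, hab, SimpleGraph.mem_edgeSet] at this
            exact this
          apply huniq (Sum.inl a) (by simp)
          ext y
          simp only [tau, Finset.mem_filter, hab, Sym2.mem_iff]
          constructor
          · rintro ⟨hy, rfl⟩
            exact ⟨hy, Or.inl rfl⟩
          · rintro ⟨hy, (rfl | rfl)⟩
            · exact ⟨hy, rfl⟩
            · exact absurd hy hbH
        obtain ⟨⟨a, b⟩, hab⟩ := e.val.exists_rep
        obtain ⟨x, hx⟩ := hne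
        simp only [tau, Finset.mem_filter] at hx
        obtain ⟨hxH, hxe⟩ := hx
        have hxab : x = a ∨ x = b := by
          rw [← hab] at hxe; simpa using hxe
        have haH : a ∈ H ∧ b ∈ H := by
          rcases hxab with rfl | rfl
          · exact ⟨hxH, haux x b hab.symm hxH⟩
          · refine ⟨haux x a ?_ hxH, hxH⟩
            rw [← hab, Sym2.eq_swap]
        intro v hv
        rw [← hab] at hv
        rcases Sym2.mem_iff.mp hv with rfl | rfl
        · exact haH.1
        · exact haH.2
    · rintro (⟨e, rfl, hall⟩ | ⟨v, rfl, hvH, hnb⟩)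
      · obtain ⟨⟨a, b⟩, hab⟩ := e.val.exists_rep
        have hadj : G.Adj a b := by
          have := e.2
          rw [SimpleGraph.mem_edgeFinset, ← hab, SimpleGraph.mem_edgeSet] at this
          exact this
        have haH : a ∈ H := hall a (by rw [← hab]; simp)
        have hbH : b ∈ H := hall b (by rw [← hab]; simp)
        have hane : a ≠ b := hadj.ne
        constructor
        · exact ⟨a, by simp [tau, haH, ← hab]⟩
        · intro l' hne heq
          have haT : a ∈ tau G H (Sum.inr e) := by simp [tau, haH, ← hab]
          have hbT : b ∈ tau G H (Sum.inr e) := by simp [tau, hbH, ← hab]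
          cases l' with
          | inl v' =>
            rw [← heq] at haT hbT
            simp only [tau, Finset.mem_filter] at haT hbT
            exact hane (haT.2.trans hbT.2.symm)
          | inr e' =>
            rw [← heq] at haT hbT
            simp only [tau, Finset.mem_filter] at haT hbT
            have : e'.val = s(a, b) := (Sym2.mem_and_mem_iff hane).mp ⟨haT.2, hbT.2⟩
            have : e' = e := Subtype.ext (this.trans hab)
            exact hne (by rw [this])
      · constructor
        · exact ⟨v, by simp [tau, hvH]⟩
        · intro l' hne heq
          have hvT : v ∈ tau G H (Sum.inl v) := by simp [tau, hvH]
          cases l' with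
          | inl v' =>
            rw [← heq] at hvT
            simp only [tau, Finset.mem_filter] at hvT
            exact hne (by rw [hvT.2])
          | inr e' =>
            rw [← heq] at hvT
            simp only [tau, Finset.mem_filter] at hvT
            obtain ⟨⟨a, b⟩, hab⟩ := e'.val.exists_rep
            have hadj : G.Adj a b := by
              have := e'.2
              rw [SimpleGraph.mem_edgeFinset, ← hab, SimpleGraph.mem_edgeSet] at this
              exact this
            have hve : v = a ∨ v = b := by
              have := hvT.2; rw [← hab] at this; simpa using this
            rcases hve with rfl | rfl
            · have hbH : b ∈ H := hnb b hadj
              have : b ∈ tau G H (Sum.inr e') := by simp [tau, hbH, ← hab]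
              rw [heq] at this
              simp only [tau, Finset.mem_filter] at this
              exact hadj.ne this.2.symm
            · have haH : a ∈ H := hnb a hadj.symm
              have : a ∈ tau G H (Sum.inr e') := by simp [tau, haH, ← hab]
              rw [heq] at this
              simp only [tau, Finset.mem_filter] at this
              exact hadj.ne this.2
  refine ⟨key, ?_⟩
  show (Finset.univ.filter (IsSingleton G H)).card = _
  rw [← Finset.card_toLeft_add_card_toRight, Nat.add_comm]
  congr 1
  · apply Finset.card_bij (fun (e : {e : Sym2 V // e ∈ G.edgeFinset}) _ => e.val)
    · intro e he
      simp only [Finset.mem_toRight, Finset.mem_filter, Finset.mem_univ, true_and] at he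
      rcases (key _).1 he with ⟨e', he1, he2⟩ | ⟨v, hv, _⟩
      · have hee : e = e' := Sum.inr.inj he1
        rw [hee]
        exact Finset.mem_filter.mpr ⟨e'.2, he2⟩
      · exact absurd hv (by simp)
    · intro e1 h1 e2 h2 h
      exact Subtype.ext h
    · intro e hme
      rw [Finset.mem_filter] at hme
      refine ⟨⟨e, hme.1⟩, ?_, rfl⟩
      simp only [Finset.mem_toRight, Finset.mem_filter, Finset.mem_univ, true_and]
      exact (key _).2 (Or.inl ⟨⟨e, hme.1⟩, rfl, hme.2⟩)
  · congr 1
    ext v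
    simp only [Finset.mem_toLeft, Finset.mem_filter, Finset.mem_univ, true_and]
    rw [key (Sum.inl v)]
    constructor
    · rintro (⟨e, he, _⟩ | ⟨v', hv', h1, h2⟩)
      · exact absurd he (by simp)
      · obtain rfl : v' = v := (Sum.inl.inj hv').symm
        exact ⟨h1, h2⟩
    · rintro ⟨h1, h2⟩
      exact Or.inr ⟨v, rfl, h1, h2⟩
end

section
/- Let t, r, t', r', k, m, n be nonnegative real numbers satisfying: n <= m, m*log n >= 2, r' <= k, log n * max(k, t') >= 4, and (t + r)*m*log n + (m - t + n - r) <= log n * ( (t' + r')*m*log n + (m - t' + n - r') ). Then t <= 5*log n * max(k, t'). (Here log denotes the natural logarithm.) -/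
/-- The arithmetic step in the proof that a `(log m)`-approximation
for cost-effective conceptual design over DAG taxonomies yields an
`O(log n)`-approximation for Densest-k-Subgraph. -/
theorem dks_arithmetic (t r t' r' k m n : ℝ)
    (ht : 0 ≤ t) (hr : 0 ≤ r) (ht' : 0 ≤ t') (hr' : 0 ≤ r')
    (hk : 0 ≤ k) (hm : 0 ≤ m) (hn : 0 ≤ n)
    (hnm : n ≤ m)
    (hml : 2 ≤ m * Real.log n)
    (hrk : r' ≤ k)
    (hbig : 4 ≤ Real.log n * max k t')
    (happrox : (t + r) * (m * Real.log n) + (m - t + n - r) ≤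
        Real.log n * ((t' + r') * (m * Real.log n) + (m - t' + n - r'))) :
    t ≤ 5 * Real.log n * max k t' := by
  set L := Real.log n with hLdef
  set X := max k t' with hXdef
  have hXk : k ≤ X := le_max_left _ _
  have hXt : t' ≤ X := le_max_right _ _
  have hX0 : 0 ≤ X := le_trans hk hXk
  have hrX : r' ≤ X := hrk.trans hXk
  have hL : 0 < L := by
    by_contra h
    push_neg at h
    nlinarith [mul_nonpos_of_nonpos_of_nonneg h hX0]
  -- RHS inner bound
  have hinner : (t' + r') * (m * L) + (m - t' + n - r') ≤ 2 * X * (m * L) + 2 * m := by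
    nlinarith [mul_le_mul_of_nonneg_right (add_le_add hXt hrX) (le_trans (by norm_num) hml)]
  have hRHS : L * ((t' + r') * (m * L) + (m - t' + n - r')) ≤
      2 * X * L * (m * L) + 2 * (m * L) := by
    have := mul_le_mul_of_nonneg_left hinner hL.le
    nlinarith [this]
  have key : t * (m * L - 1) ≤ 2 * X * L * (m * L) + 2 * (m * L) := by
    nlinarith [happrox, hRHS, mul_nonneg hr (by linarith : (0:ℝ) ≤ m * L - 1)]
  -- conclude
  nlinarith [key, mul_nonneg (by linarith : (0:ℝ) ≤ m * L - 2) (by linarith : (0:ℝ) ≤ 3 * L * X - 2), hbig, hml]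
end

section
/- In the Densest-k-Subgraph reduction instance: for every natural number k with 1 <= k <= n, the maximum of QU(H) over all H contained in V with |H| <= k equals the maximum of QU(H) over all H contained in V with |H| = k; i.e., there exists an optimal design that annotates exactly k non-leaf concepts. -/
open scoped Classical BigOperators

namespace DkSReduction

variable {V : Type} [Fintype V] [DecidableEq V]

/-- An edge leaf is a singleton iff both its endpoints lie in `H`. -/
lemma isSingleton_inr_iff (G : SimpleGraph V) [DecidableRel G.Adj] (H : Finset V)
    (e : {e : Sym2 V // e ∈ G.edgeFinset}) :
    IsSingleton G H (Sum.inr e) ↔ ∀ v ∈ e.val, v ∈ H := by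
  obtain ⟨e, he⟩ := e
  induction e using Sym2.ind with
  | _ a b =>
    have hab : a ≠ b := by
      intro h
      exact SimpleGraph.not_isDiag_of_mem_edgeFinset he (by simp [h])
    constructor
    · rintro ⟨hne, huniq⟩ v hv
      by_contra hvH
      rw [Sym2.mem_iff] at hv
      obtain ⟨w, hw⟩ := hne
      simp only [tau, Finset.mem_filter] at hw
      obtain ⟨hwH, hw2⟩ := hw
      rw [Sym2.mem_iff] at hw2
      have hwv : w ≠ v := fun h => hvH (h ▸ hwH)
      have htr : tau G H (Sum.inl w) = tau G H (Sum.inr ⟨s(a, b), he⟩) := by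
        ext x
        simp only [tau, Finset.mem_filter, Sym2.mem_iff]
        constructor
        · rintro ⟨hx, rfl⟩; exact ⟨hx, hw2⟩
        · rintro ⟨hx, hx2⟩
          refine ⟨hx, ?_⟩
          rcases hv with rfl | rfl <;> rcases hw2 with rfl | rfl <;>
            rcases hx2 with rfl | rfl <;> simp_all
      exact huniq (Sum.inl w) (by simp) htr
    · intro hsub
      have haH : a ∈ H := hsub a (by simp)
      have hbH : b ∈ H := hsub b (by simp)
      have htau : tau G H (Sum.inr ⟨s(a, b), he⟩) = {a, b} := by
        ext x
        simp only [tau, Finset.mem_filter, Sym2.mem_iff, Finset.mem_insert,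
          Finset.mem_singleton]
        constructor
        · rintro ⟨_, h⟩; exact h
        · rintro (rfl | rfl) <;> simp [haH, hbH]
      refine ⟨?_, ?_⟩
      · rw [htau]; exact ⟨a, by simp⟩
      · rintro (v | ⟨e', he'⟩) hne heq
        · rw [htau] at heq
          have hav : a ∈ tau G H (Sum.inl v) := by rw [heq]; simp
          have hbv : b ∈ tau G H (Sum.inl v) := by rw [heq]; simp
          simp only [tau, Finset.mem_filter] at hav hbv
          exact hab (hav.2.trans hbv.2.symm)
        · rw [htau] at heq
          have ha' : a ∈ e' := by
            have h1 : a ∈ tau G H (Sum.inr ⟨e', he'⟩) := by rw [heq]; simp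
            simp only [tau, Finset.mem_filter] at h1
            exact h1.2
          have hb' : b ∈ e' := by
            have h1 : b ∈ tau G H (Sum.inr ⟨e', he'⟩) := by rw [heq]; simp
            simp only [tau, Finset.mem_filter] at h1
            exact h1.2
          have : e' = s(a, b) :=
            Sym2.eq_of_ne_mem hab ha' hb' (by simp) (by simp)
          exact hne (by simp [this])

/-- A vertex leaf `v` is a singleton iff `v ∈ H` and every edge through `v`
lies entirely inside `H`. -/
lemma isSingleton_inl_iff (G : SimpleGraph V) [DecidableRel G.Adj] (H : Finset V)
    (v : V) :
    IsSingleton G H (Sum.inl v) ↔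
      v ∈ H ∧ ∀ e : {e : Sym2 V // e ∈ G.edgeFinset}, v ∈ e.val →
        ∀ w ∈ e.val, w ∈ H := by
  constructor
  · rintro ⟨hne, huniq⟩
    have hvH : v ∈ H := by
      obtain ⟨w, hw⟩ := hne
      simp only [tau, Finset.mem_filter] at hw
      exact hw.2 ▸ hw.1
    refine ⟨hvH, ?_⟩
    rintro ⟨e, he⟩
    induction e using Sym2.ind with
    | _ a b =>
      intro hv w hw
      by_contra hwH
      have hab : a ≠ b := by
        intro h
        exact SimpleGraph.not_isDiag_of_mem_edgeFinset he (by simp [h])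
      have hwv : w ≠ v := fun h => hwH (h ▸ hvH)
      simp only [Sym2.mem_iff] at hv hw
      have htr : tau G H (Sum.inr ⟨s(a, b), he⟩) = tau G H (Sum.inl v) := by
        ext x
        simp only [tau, Finset.mem_filter, Sym2.mem_iff]
        constructor
        · rintro ⟨hx, hx2⟩
          refine ⟨hx, ?_⟩
          rcases hv with rfl | rfl <;> rcases hw with rfl | rfl <;>
            rcases hx2 with rfl | rfl <;> simp_all
        · rintro ⟨hx, rfl⟩; exact ⟨hx, hv⟩
      exact huniq (Sum.inr ⟨s(a, b), he⟩) (by simp) htr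
  · rintro ⟨hvH, hedge⟩
    have htau : tau G H (Sum.inl v) = {v} := by
      ext x
      simp only [tau, Finset.mem_filter, Finset.mem_singleton]
      exact ⟨fun h => h.2, fun h => ⟨h ▸ hvH, h⟩⟩
    refine ⟨by rw [htau]; simp, ?_⟩
    rintro (w | ⟨e, he⟩) hne heq
    · rw [htau] at heq
      have h1 : v ∈ tau G H (Sum.inl w) := by rw [heq]; simp
      simp only [tau, Finset.mem_filter] at h1
      exact hne (by simp [h1.2])
    · rw [htau] at heq
      have hv : v ∈ e := by
        have h1 : v ∈ tau G H (Sum.inr ⟨e, he⟩) := by rw [heq]; simp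
        simp only [tau, Finset.mem_filter] at h1
        exact h1.2
      induction e using Sym2.ind with
      | _ a b =>
        have hab : a ≠ b := by
          intro h
          exact SimpleGraph.not_isDiag_of_mem_edgeFinset he (by simp [h])
        have haH : a ∈ H := hedge ⟨s(a, b), he⟩ hv a (by simp)
        have hbH : b ∈ H := hedge ⟨s(a, b), he⟩ hv b (by simp)
        have ha : a ∈ ({v} : Finset V) := by
          rw [← heq]; simp only [tau, Finset.mem_filter]; exact ⟨haH, by simp⟩
        have hb : b ∈ ({v} : Finset V) := by
          rw [← heq]; simp only [tau, Finset.mem_filter]; exact ⟨hbH, by simp⟩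
        simp only [Finset.mem_singleton] at ha hb
        exact hab (ha.trans hb.symm)

lemma isSingleton_mono (G : SimpleGraph V) [DecidableRel G.Adj]
    {H H' : Finset V} (hs : H ⊆ H') (l : Leaf G) :
    IsSingleton G H l → IsSingleton G H' l := by
  cases l with
  | inl v =>
    rw [isSingleton_inl_iff, isSingleton_inl_iff]
    rintro ⟨h1, h2⟩
    exact ⟨hs h1, fun e hv w hw => hs (h2 e hv w hw)⟩
  | inr e =>
    rw [isSingleton_inr_iff, isSingleton_inr_iff]
    exact fun h v hv => hs (h v hv)

lemma sigma_mono (G : SimpleGraph V) [DecidableRel G.Adj]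
    {H H' : Finset V} (hs : H ⊆ H') : sigma G H ≤ sigma G H' := by
  apply Finset.card_le_card
  intro l hl
  simp only [Finset.mem_filter] at hl ⊢
  exact ⟨hl.1, isSingleton_mono G hs l hl.2⟩

lemma QU_mono (G : SimpleGraph V) [DecidableRel G.Adj] {u d : ℝ}
    (hu : 0 < u) (hd : 0 < d)
    (hml : 1 ≤ (G.edgeFinset.card : ℝ) * Real.log (Fintype.card V : ℝ))
    {H H' : Finset V} (hs : H ⊆ H') : QU G u d H ≤ QU G u d H' := by
  have hσ : (sigma G H : ℝ) ≤ (sigma G H' : ℝ) := by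
    exact_mod_cast sigma_mono G hs
  unfold QU
  have hud : 0 < u * d := mul_pos hu hd
  nlinarith [mul_le_mul_of_nonneg_left hml (sub_nonneg.mpr hσ)]

end DkSReduction

open DkSReduction

/-- In the Densest-k-Subgraph reduction instance, for every
`1 ≤ k ≤ n` the maximum of `QU` over designs of size at most `k` is attained by a
design of size exactly `k`: there exists an optimal design annotating exactly `k`
non-leaf concepts. -/
theorem exists_optimal_design_of_card_eq {V : Type} [Fintype V] [DecidableEq V]
    (G : SimpleGraph V) [DecidableRel G.Adj]
    (hn : 2 ≤ Fintype.card V) (u d : ℝ) (hu : 0 < u) (hd : 0 < d)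
    (hml : 1 ≤ (G.edgeFinset.card : ℝ) * Real.log (Fintype.card V : ℝ))
    (k : ℕ) (hk1 : 1 ≤ k) (hkn : k ≤ Fintype.card V) :
    ∃ H' : Finset V, H'.card = k ∧
      ∀ H : Finset V, H.card ≤ k → QU G u d H ≤ QU G u d H' := by
  have hne : (Finset.univ.powersetCard k : Finset (Finset V)).Nonempty := by
    obtain ⟨t, _, ht⟩ := Finset.exists_superset_card_eq
      (s := (∅ : Finset V)) (by simp) hkn
    exact ⟨t, by simp [Finset.mem_powersetCard_univ, ht]⟩
  obtain ⟨H', hH'mem, hmax⟩ :=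
    Finset.exists_max_image (Finset.univ.powersetCard k) (QU G u d) hne
  rw [Finset.mem_powersetCard_univ] at hH'mem
  refine ⟨H', hH'mem, fun H hH => ?_⟩
  obtain ⟨t, hHt, htk⟩ := Finset.exists_superset_card_eq hH hkn
  calc QU G u d H ≤ QU G u d t := QU_mono G hu hd hml hHt
    _ ≤ QU G u d H' := hmax t (by rwa [Finset.mem_powersetCard_univ])
end
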